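/- Let N be a group, let G be an abelian group, and let φ : G → Aut(N) be an action of G on N by automorphisms. In the semidirect product Γ = N ⋊_φ G, the normalizer of the canonical subgroup {1} ⋊ G (the image of the inclusion G → Γ) consists exactly of the elements (n, g) with φ(h)(n) = n for all h ∈ G; consequently this normalizer is isomorphic, as a group, to the direct product N^G × G, where N^G = {n ∈ N : φ(h)(n) = n for all h ∈ G} is the subgroup of G-fixed points. -/

import Mathlib

/-- The subgroup of `G`-fixed points of `N` under an action `φ : G →* MulAut N`. -/
def fixedSubgroup {N G : Type*} [Group N] [Group G] (φ : G →* MulAut N) : Subgroup N where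
  carrier := {n : N | ∀ h : G, φ h n = n}
  one_mem' := fun h => map_one (φ h)
  mul_mem' := by
    intro a b ha hb h
    rw [map_mul, ha h, hb h]
  inv_mem' := by
    intro a ha h
    rw [map_inv, ha h]

lemma mem_inr_range {N G : Type*} [Group N] [Group G] (φ : G →* MulAut N)
    (x : N ⋊[φ] G) : x ∈ (SemidirectProduct.inr : G →* N ⋊[φ] G).range ↔ x.left = 1 := by
  constructor
  · rintro ⟨g, rfl⟩; rfl
  · intro h
    exact ⟨x.right, by ext <;> simp [h]⟩

lemma conj_left {N G : Type*} [Group N] [CommGroup G] (φ : G →* MulAut N) (x y : N ⋊[φ] G) :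
    (x * y * x⁻¹).left = x.left * φ x.right y.left * φ y.right x.left⁻¹ := by
  have h : φ ((x * y).right) (φ x.right⁻¹ x.left⁻¹) = φ y.right x.left⁻¹ := by
    rw [SemidirectProduct.mul_right, ← MulAut.mul_apply, ← map_mul,
      mul_comm x.right y.right, mul_assoc, mul_inv_cancel, mul_one]
  rw [SemidirectProduct.mul_left, SemidirectProduct.inv_left, h,
    SemidirectProduct.mul_left]

lemma key_mem {N G : Type*} [Group N] [CommGroup G] (φ : G →* MulAut N) (x : N ⋊[φ] G) :
    x ∈ Subgroup.normalizer ((SemidirectProduct.inr : G →* N ⋊[φ] G).range : Set (N ⋊[φ] G)) ↔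
      ∀ h : G, φ h x.left = x.left := by
  rw [Subgroup.mem_normalizer_iff]
  constructor
  · intro hx h
    have h1 : (x * SemidirectProduct.inr h * x⁻¹).left = 1 :=
      (mem_inr_range φ _).mp ((hx (SemidirectProduct.inr h)).mp ⟨h, rfl⟩)
    rw [conj_left] at h1
    simp only [SemidirectProduct.left_inr, SemidirectProduct.right_inr, map_one, mul_one] at h1
    have : φ h x.left⁻¹ = x.left⁻¹ := by
      rw [eq_inv_of_mul_eq_one_right h1]
    calc φ h x.left = (φ h x.left⁻¹)⁻¹ := by rw [map_inv, inv_inv]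
      _ = x.left := by rw [this, inv_inv]
  · intro hx y
    rw [mem_inr_range, mem_inr_range, conj_left]
    have h2 : φ y.right x.left⁻¹ = x.left⁻¹ := by rw [map_inv, hx]
    rw [h2]
    have h3 : x.left * φ x.right y.left * x.left⁻¹ = 1 ↔ φ x.right y.left = 1 := by
      constructor
      · intro h
        have := congrArg (fun z => x.left⁻¹ * z * x.left) h
        simpa [mul_assoc] using this
      · intro h; rw [h]; simp
    rw [h3]
    constructor
    · intro h; rw [h, map_one]
    · intro h
      have := congrArg (φ x.right⁻¹) h
      simpa [← MulAut.mul_apply, ← map_mul] using this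

/-- For `G` abelian acting on `N` via `φ`, the normalizer of the canonical
subgroup `{1} ⋊ G` of `N ⋊[φ] G` consists exactly of the elements `(n, g)` with
`φ h n = n` for all `h : G`, and this normalizer is isomorphic to `N^G × G`. -/
theorem stmt1 {N G : Type*} [Group N] [CommGroup G] (φ : G →* MulAut N) :
    (∀ x : N ⋊[φ] G,
      x ∈ Subgroup.normalizer ((SemidirectProduct.inr : G →* N ⋊[φ] G).range : Set (N ⋊[φ] G)) ↔
        ∀ h : G, φ h x.left = x.left) ∧
    Nonempty
      (((Subgroup.normalizer ((SemidirectProduct.inr : G →* N ⋊[φ] G).range : Set (N ⋊[φ] G)) : Subgroup (N ⋊[φ] G))) ≃*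
        (fixedSubgroup φ × G)) := by
  refine ⟨key_mem φ, ⟨?_⟩⟩
  refine
    { toFun := fun x => (⟨x.1.left, (key_mem φ x.1).mp x.2⟩, x.1.right)
      invFun := fun p => ⟨⟨p.1.1, p.2⟩, (key_mem φ _).mpr (fun h => p.1.2 h)⟩
      left_inv := fun x => by ext <;> rfl
      right_inv := fun p => by ext <;> rfl
      map_mul' := fun x y => by
        have hy : φ x.1.right y.1.left = y.1.left := (key_mem φ y.1).mp y.2 x.1.right
        ext
        · show (x.1 * y.1).left = x.1.left * y.1.left
          rw [SemidirectProduct.mul_left, hy]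
        · rfl }
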